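/- Let char F = 3, let K be a quadratic étale F-algebra with norm n, and let a ∈ K with n(a)=1, writing a = α + βk where K = F·1 ⊕ F·k with n(1,k) = 0. Then a ∈ K³ := {b³ : b ∈ K} if and only if α ∈ F³ (where F³ = {λ³ : λ ∈ F}). -/

import Mathlib

/-- Over a field of characteristic 3, in a quadratic étale algebra
`K = F·1 ⊕ F·k` with `k² = −ν·1` (`ν ≠ 0`), a norm 1 element `a = α + βk`
(`α² + β²ν = 1`) is a cube in `K` if and only if `α` is a cube in `F`. -/
theorem cube_in_quadratic_etale_char3
    {F K : Type*} [Field F] [CharP F 3] [CommRing K] [Algebra F K]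
    (k : K) (b : Module.Basis (Fin 2) F K) (hb0 : b 0 = 1) (hb1 : b 1 = k)
    (ν : F) (hν : ν ≠ 0) (hk : k ^ 2 = algebraMap F K (-ν))
    (α β : F) (ha : α ^ 2 + β ^ 2 * ν = 1) :
    (∃ c : K, c ^ 3 = α • (1 : K) + β • k) ↔ (∃ l : F, l ^ 3 = α) := by
  haveI : Nontrivial K := ⟨1, 0, by rw [← hb0]; exact b.ne_zero 0⟩
  haveI : CharP K 3 := charP_of_injective_ringHom (algebraMap F K).injective 3
  haveI : Fact (Nat.Prime 3) := ⟨by norm_num⟩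
  have h3 : (3 : F) = 0 := by exact_mod_cast CharP.cast_eq_zero F 3
  have huniq : ∀ x y x' y' : F,
      x • (1 : K) + y • k = x' • (1 : K) + y' • k → x = x' := by
    intro x y x' y' h
    rw [← hb0, ← hb1] at h
    have := congrArg (fun z => b.repr z 0) h
    simpa [Finsupp.single_apply] using this
  have hk3 : k ^ 3 = (-ν) • k := by
    rw [pow_succ, hk, ← Algebra.smul_def]
  have hcube : ∀ μ lam : F,
      (μ • (1 : K) + lam • k) ^ 3 = (μ ^ 3) • (1 : K) + (-ν * lam ^ 3) • k := by
    intro μ lam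
    rw [add_pow_char, smul_pow, smul_pow, one_pow, hk3, smul_smul,
      mul_comm (lam ^ 3) (-ν)]
  constructor
  · rintro ⟨c, hc⟩
    refine ⟨b.repr c 0, ?_⟩
    have hrep : c = (b.repr c 0) • (1 : K) + (b.repr c 1) • k := by
      rw [← hb0, ← hb1]
      have := b.sum_repr c
      rw [Fin.sum_univ_two] at this
      exact this.symm
    rw [hrep, hcube] at hc
    exact huniq _ _ _ _ hc
  · rintro ⟨l, hl⟩
    have hkey : β ^ 2 * ν = (1 - l ^ 2) ^ 3 := by
      linear_combination ha + (l ^ 2 - l ^ 4) * h3 + (l ^ 3 + α) * hl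
    by_cases hβ : β = 0
    · refine ⟨l • (1 : K) + (0 : F) • k, ?_⟩
      rw [hcube, hl, hβ]
      norm_num
    · have h1 : (1 - l ^ 2) ≠ 0 := by
        intro h
        exact mul_ne_zero (pow_ne_zero 2 hβ) hν (by rw [hkey, h]; norm_num)
      refine ⟨l • (1 : K) + (-β / (1 - l ^ 2)) • k, ?_⟩
      rw [hcube, hl]
      congr 1
      congr 1
      field_simp
      linear_combination hkey
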